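/- Let f be strongly convex with parameter l > 0 and A ∈ ℝ^{m×n} arbitrary. Then the vector y* := A x* is the same for every minimizer x* of the function x ↦ f(Ax); i.e., the image under A of the solution set is a single point. -/

import Mathlib

theorem stmt_6 {m n : ℕ} (f : EuclideanSpace ℝ (Fin m) → ℝ) (l : ℝ) (hl : 0 < l)
    (hf : StrongConvexOn Set.univ l f) (A : Matrix (Fin m) (Fin n) ℝ)
    (F : EuclideanSpace ℝ (Fin n) → ℝ) (hF : ∀ x, F x = f (WithLp.toLp 2 (A.mulVec x)))
    (x₁ x₂ : EuclideanSpace ℝ (Fin n))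
    (hx₁ : ∀ y, F x₁ ≤ F y) (hx₂ : ∀ y, F x₂ ≤ F y) :
    A.mulVec x₁ = A.mulVec x₂ := by
  set y₁ : EuclideanSpace ℝ (Fin m) := WithLp.toLp 2 (A.mulVec x₁) with hy₁
  set y₂ : EuclideanSpace ℝ (Fin m) := WithLp.toLp 2 (A.mulVec x₂) with hy₂
  have key := hf.2 (Set.mem_univ y₁) (Set.mem_univ y₂)
    (by norm_num : (0:ℝ) ≤ 1/2) (by norm_num : (0:ℝ) ≤ 1/2) (by norm_num)
  simp only [smul_eq_mul] at key
  set z : EuclideanSpace ℝ (Fin n) := (1/2 : ℝ) • x₁ + (1/2 : ℝ) • x₂ with hz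
  have hAz : (WithLp.toLp 2 (A.mulVec z) : EuclideanSpace ℝ (Fin m)) = (1/2 : ℝ) • y₁ + (1/2 : ℝ) • y₂ := by
    rw [hy₁, hy₂, hz, WithLp.ofLp_add, WithLp.ofLp_smul, WithLp.ofLp_smul, Matrix.mulVec_add,
      Matrix.mulVec_smul, Matrix.mulVec_smul, WithLp.toLp_add, WithLp.toLp_smul, WithLp.toLp_smul]
  have h1 : F x₁ ≤ F z := hx₁ z
  have h2 : F x₂ ≤ F z := hx₂ z
  rw [hF x₁, hF z, ← hy₁, hAz] at h1
  rw [hF x₂, hF z, ← hy₂, hAz] at h2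
  have hnorm : ‖y₁ - y₂‖ = 0 := by
    by_contra h
    have hr0 : (0:ℝ) ≤ ‖y₁ - y₂‖ := norm_nonneg _
    have hrpos : 0 < ‖y₁ - y₂‖ := lt_of_le_of_ne hr0 (Ne.symm h)
    nlinarith [key, h1, h2, mul_pos hl (mul_pos hrpos hrpos)]
  have : y₁ - y₂ = 0 := norm_eq_zero.mp hnorm
  have : y₁ = y₂ := sub_eq_zero.mp this
  rw [hy₁, hy₂] at this
  exact WithLp.toLp_injective 2 this
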